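/- arXiv:0704.3156 — 3 statements merged into one kernel-verified Lean document; each statement's English description precedes it below -/
import Mathlib

section
/- (Norm submultiplicativity of cloud convolution) Define |||ν||| := sup over markers η of Σ_{σ ⪯ η} |ν(σ)|. Then for clouds ν₁, ν₂ of finite norm, |||ν₁ * ν₂||| ≤ |||ν₁||| · |||ν₂|||. -/
open scoped ENNReal

/-- Convolution of clouds (real functions on markers, i.e. nonempty lists):
`(ν₁*ν₂)(η) = Σ` over decompositions `η = η₁ * η₂` with `last η₁ = first η₂`
of `ν₁(η₁) ν₂(η₂)`. -/
def cloudConv {X : Type*} (μ ν : List X → ℝ) : List X → ℝ :=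
  fun η => ∑ j ∈ Finset.range η.length, μ (η.take (j + 1)) * ν (η.drop j)

/-- The cloud norm `|||ν||| = sup_η Σ_{σ ⪯ η} |ν(σ)|` (valued in `[0,∞]`;
the empty list contributes `0` and does not affect the supremum). -/
noncomputable def cloudNorm {X : Type*} (ν : List X → ℝ) : ℝ≥0∞ :=
  ⨆ η : List X, ENNReal.ofReal (∑ j ∈ Finset.range η.length, |ν (η.take (j + 1))|)

/-- Norm submultiplicativity of cloud convolution:
`|||ν₁ * ν₂||| ≤ |||ν₁||| · |||ν₂|||` for clouds of finite norm. -/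
theorem cloudNorm_conv_le {X : Type*} (ν₁ ν₂ : List X → ℝ)
    (h₁ : cloudNorm ν₁ ≠ ⊤) (h₂ : cloudNorm ν₂ ≠ ⊤) :
    cloudNorm (cloudConv ν₁ ν₂) ≤ cloudNorm ν₁ * cloudNorm ν₂ := by
  have key : ∀ (ν : List X → ℝ), cloudNorm ν ≠ ⊤ → ∀ (η : List X),
      ∑ j ∈ Finset.range η.length, |ν (η.take (j+1))| ≤ (cloudNorm ν).toReal := by
    intro ν h η
    have hle : ENNReal.ofReal (∑ j ∈ Finset.range η.length, |ν (η.take (j+1))|) ≤ cloudNorm ν :=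
      le_iSup (fun η : List X =>
        ENNReal.ofReal (∑ j ∈ Finset.range η.length, |ν (η.take (j+1))|)) η
    have := ENNReal.toReal_mono h hle
    rwa [ENNReal.toReal_ofReal (Finset.sum_nonneg fun _ _ => abs_nonneg _)] at this
  set A := (cloudNorm ν₁).toReal with hA
  set B := (cloudNorm ν₂).toReal with hB
  refine iSup_le fun η => ?_
  set n := η.length with hn
  have main : ∑ j ∈ Finset.range n, |cloudConv ν₁ ν₂ (η.take (j+1))| ≤ A * B := by
    have step1 : ∑ j ∈ Finset.range n, |cloudConv ν₁ ν₂ (η.take (j+1))| ≤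
        ∑ j ∈ Finset.range n, ∑ i ∈ Finset.range (j+1),
          |ν₁ (η.take (i+1))| * |ν₂ ((η.drop i).take (j+1-i))| := by
      refine Finset.sum_le_sum fun j hj => ?_
      have hjn : j + 1 ≤ n := Finset.mem_range.mp hj
      have hlen : (η.take (j+1)).length = j + 1 := by
        rw [List.length_take]
        omega
      calc |cloudConv ν₁ ν₂ (η.take (j+1))|
          ≤ ∑ i ∈ Finset.range ((η.take (j+1)).length),
              |ν₁ ((η.take (j+1)).take (i+1)) * ν₂ ((η.take (j+1)).drop i)| :=
            Finset.abs_sum_le_sum_abs _ _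
        _ = ∑ i ∈ Finset.range (j+1),
              |ν₁ (η.take (i+1))| * |ν₂ ((η.drop i).take (j+1-i))| := by
            rw [hlen]
            refine Finset.sum_congr rfl fun i hi => ?_
            have hij : i + 1 ≤ j + 1 := Finset.mem_range.mp hi
            rw [abs_mul, List.take_take, Nat.min_eq_left hij, List.drop_take]
    have step2 : ∑ j ∈ Finset.range n, ∑ i ∈ Finset.range (j+1),
          |ν₁ (η.take (i+1))| * |ν₂ ((η.drop i).take (j+1-i))| =
        ∑ i ∈ Finset.range n, ∑ j ∈ Finset.Ico i n,
          |ν₁ (η.take (i+1))| * |ν₂ ((η.drop i).take (j+1-i))| := by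
      refine Finset.sum_comm' ?_
      intro j i
      simp only [Finset.mem_range, Finset.mem_Ico]
      omega
    have step3 : ∀ i ∈ Finset.range n,
        ∑ j ∈ Finset.Ico i n, |ν₂ ((η.drop i).take (j+1-i))| ≤ B := by
      intro i hi
      have hin : i < n := Finset.mem_range.mp hi
      have : ∑ j ∈ Finset.Ico i n, |ν₂ ((η.drop i).take (j+1-i))| =
          ∑ k ∈ Finset.range (n - i), |ν₂ ((η.drop i).take (k+1))| := by
        rw [Finset.sum_Ico_eq_sum_range]
        refine Finset.sum_congr rfl fun k _ => ?_
        have hk : i + k + 1 - i = k + 1 := by omega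
        rw [hk]
      rw [this]
      have hlen : (η.drop i).length = n - i := by rw [List.length_drop]
      calc ∑ k ∈ Finset.range (n - i), |ν₂ ((η.drop i).take (k+1))|
          = ∑ k ∈ Finset.range ((η.drop i).length), |ν₂ ((η.drop i).take (k+1))| := by rw [hlen]
        _ ≤ B := key ν₂ h₂ (η.drop i)
    calc ∑ j ∈ Finset.range n, |cloudConv ν₁ ν₂ (η.take (j+1))|
        ≤ ∑ i ∈ Finset.range n, ∑ j ∈ Finset.Ico i n,
            |ν₁ (η.take (i+1))| * |ν₂ ((η.drop i).take (j+1-i))| := step1.trans_eq step2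
      _ = ∑ i ∈ Finset.range n, |ν₁ (η.take (i+1))| *
            ∑ j ∈ Finset.Ico i n, |ν₂ ((η.drop i).take (j+1-i))| := by
          simp [Finset.mul_sum]
      _ ≤ ∑ i ∈ Finset.range n, |ν₁ (η.take (i+1))| * B := by
          refine Finset.sum_le_sum fun i hi => ?_
          exact mul_le_mul_of_nonneg_left (step3 i hi) (abs_nonneg _)
      _ = (∑ i ∈ Finset.range n, |ν₁ (η.take (i+1))|) * B := by rw [Finset.sum_mul]
      _ ≤ A * B := mul_le_mul_of_nonneg_right (key ν₁ h₁ η) ENNReal.toReal_nonneg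
  calc ENNReal.ofReal (∑ j ∈ Finset.range n, |cloudConv ν₁ ν₂ (η.take (j+1))|)
      ≤ ENNReal.ofReal (A * B) := ENNReal.ofReal_le_ofReal main
    _ = ENNReal.ofReal A * ENNReal.ofReal B := ENNReal.ofReal_mul ENNReal.toReal_nonneg
    _ = cloudNorm ν₁ * cloudNorm ν₂ := by
        rw [hA, hB, ENNReal.ofReal_toReal h₁, ENNReal.ofReal_toReal h₂]
end

section
/- (Convolution from the right preserves ⊴ iff ν ∈ R) For a nonnegative cloud ν, the following are equivalent: (a) for all clouds μ₁ ⊴ μ₂ one has μ₁*ν ⊴ μ₂*ν; (b) ρ¹*ν ⊴ ν, where ρ¹ is the indicator of level-1 markers; (c) ν~(η') ≤ ν~(η) whenever η' is a suffix of η. -/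
/-- Cumulative distribution of a cloud: `μ~(η) = Σ_{σ ⪯ η} μ(σ)`. -/
def cloudCum {X : Type*} (μ : List X → ℝ) : List X → ℝ :=
  fun η => ∑ j ∈ Finset.range η.length, μ (η.take (j + 1))

/-- The partial order `μ ⊴ ν`: `μ~(η) ≤ ν~(η)` for all markers `η`. -/
def cloudLE {X : Type*} (μ ν : List X → ℝ) : Prop :=
  ∀ η : List X, η ≠ [] → cloudCum μ η ≤ cloudCum ν η

/-- `ρ¹`, the indicator cloud of level-1 markers (lists of length 2). -/
def rhoOne {X : Type*} : List X → ℝ :=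
  fun η => if η.length = 2 then 1 else 0

/-- Reindexing of a triangular double sum. -/
lemma sum_tri (n : ℕ) (f : ℕ → ℕ → ℝ) :
    ∑ k ∈ Finset.range n, ∑ j ∈ Finset.range (k+1), f j k
      = ∑ j ∈ Finset.range n, ∑ i ∈ Finset.range (n - j), f j (j + i) := by
  rw [Finset.sum_sigma', Finset.sum_sigma']
  refine Finset.sum_nbij' (fun p => ⟨p.2, p.1 - p.2⟩) (fun p => ⟨p.1 + p.2, p.1⟩) ?_ ?_ ?_ ?_ ?_
  · rintro ⟨k, j⟩ h
    simp only [Finset.mem_sigma, Finset.mem_range] at *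
    omega
  · rintro ⟨j, i⟩ h
    simp only [Finset.mem_sigma, Finset.mem_range] at *
    omega
  · rintro ⟨k, j⟩ h
    simp only [Finset.mem_sigma, Finset.mem_range] at h
    dsimp only
    have : j + (k - j) = k := by omega
    rw [this]
  · rintro ⟨j, i⟩ h
    dsimp only
    have : j + i - j = i := by omega
    rw [this]
  · rintro ⟨k, j⟩ h
    simp only [Finset.mem_sigma, Finset.mem_range] at h
    dsimp only
    congr 1
    omega

/-- The cumulative distribution of a prefix. -/
lemma cloudCum_take {X : Type*} (μ : List X → ℝ) (η : List X) {j : ℕ} (hj : j < η.length) :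
    cloudCum μ (η.take (j+1)) = ∑ i ∈ Finset.range (j+1), μ (η.take (i+1)) := by
  simp only [cloudCum]
  have hl : (η.take (j+1)).length = j + 1 := by
    rw [List.length_take]; omega
  rw [hl]
  refine Finset.sum_congr rfl fun i hi => ?_
  simp only [Finset.mem_range] at hi
  rw [List.take_take, min_eq_left (by omega : i + 1 ≤ j + 1)]

/-- Key identity: `(μ*ν)~(η) = Σ_j μ(η|_{j}) ν~(η drop j)`. -/
lemma cloudCum_conv {X : Type*} (μ ν : List X → ℝ) (η : List X) :
    cloudCum (cloudConv μ ν) η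
      = ∑ j ∈ Finset.range η.length, μ (η.take (j+1)) * cloudCum ν (η.drop j) := by
  set n := η.length with hn
  have step1 : cloudCum (cloudConv μ ν) η
      = ∑ k ∈ Finset.range n, ∑ j ∈ Finset.range (k+1),
          μ (η.take (j+1)) * ν ((η.drop j).take (k + 1 - j)) := by
    simp only [cloudCum, cloudConv]
    refine Finset.sum_congr rfl fun k hk => ?_
    simp only [Finset.mem_range] at hk
    have hl : (η.take (k+1)).length = k + 1 := by rw [List.length_take]; omega
    rw [hl]
    refine Finset.sum_congr rfl fun j hj => ?_
    simp only [Finset.mem_range] at hj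
    rw [List.take_take, min_eq_left (by omega : j + 1 ≤ k + 1), List.drop_take]
  rw [step1, sum_tri]
  refine Finset.sum_congr rfl fun j hj => ?_
  simp only [Finset.mem_range] at hj
  simp only [cloudCum]
  rw [Finset.mul_sum, List.length_drop]
  refine Finset.sum_congr rfl fun i hi => ?_
  have h1 : j + i + 1 - j = i + 1 := by omega
  rw [h1]

/-- Abel-summation comparison: if the partial sums of `a` are dominated by those of `b`
and `c` is nonincreasing and nonnegative at the end, then `Σ aᵢcᵢ ≤ Σ bᵢcᵢ`. -/
lemma abel_le : ∀ (n : ℕ) (a b c : ℕ → ℝ),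
    (∀ j < n, ∑ i ∈ Finset.range (j+1), a i ≤ ∑ i ∈ Finset.range (j+1), b i) →
    (∀ j, j + 1 < n → c (j+1) ≤ c j) →
    (∀ j, j + 1 = n → 0 ≤ c j) →
    ∑ j ∈ Finset.range n, a j * c j ≤ ∑ j ∈ Finset.range n, b j * c j := by
  intro n
  induction n with
  | zero => intro a b c _ _ _; simp
  | succ n ih =>
    intro a b c hab hmono hnn
    have hcn : 0 ≤ c n := hnn n rfl
    have key : ∀ f : ℕ → ℝ, ∑ j ∈ Finset.range (n+1), f j * c j
        = (∑ j ∈ Finset.range n, f j * (c j - c n)) + (∑ j ∈ Finset.range (n+1), f j) * c n := by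
      intro f
      rw [Finset.sum_range_succ, Finset.sum_mul, Finset.sum_range_succ]
      have h2 : ∑ j ∈ Finset.range n, f j * (c j - c n)
          = ∑ j ∈ Finset.range n, f j * c j - ∑ j ∈ Finset.range n, f j * c n := by
        rw [← Finset.sum_sub_distrib]
        exact Finset.sum_congr rfl fun j _ => by ring
      rw [h2]
      ring
    calc ∑ j ∈ Finset.range (n+1), a j * c j
        = (∑ j ∈ Finset.range n, a j * (c j - c n)) + (∑ j ∈ Finset.range (n+1), a j) * c n :=
          key a
      _ ≤ (∑ j ∈ Finset.range n, b j * (c j - c n)) + (∑ j ∈ Finset.range (n+1), b j) * c n := by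
          refine add_le_add ?_ (mul_le_mul_of_nonneg_right (hab n (by omega)) hcn)
          refine ih a b (fun j => c j - c n) (fun j hj => hab j (by omega)) ?_ ?_
          · intro j hj
            have := hmono j (by omega)
            linarith
          · intro j hj
            have := hmono j (by omega)
            rw [hj] at this
            linarith
      _ = ∑ j ∈ Finset.range (n+1), b j * c j := (key b).symm

lemma cloudCum_nonneg {X : Type*} {ν : List X → ℝ} (hν : ∀ η : List X, η ≠ [] → 0 ≤ ν η)
    (η : List X) : 0 ≤ cloudCum ν η := by
  refine Finset.sum_nonneg fun j hj => ?_
  simp only [Finset.mem_range] at hj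
  refine hν _ (List.ne_nil_of_length_pos ?_)
  rw [List.length_take]
  omega

/-- `δ`, the indicator cloud of level-0 markers: the convolution identity. -/
def deltaCloud {X : Type*} : List X → ℝ :=
  fun η => if η.length = 1 then 1 else 0

lemma cum_conv_rho {X : Type*} (ν : List X → ℝ) (η : List X) :
    cloudCum (cloudConv rhoOne ν) η = cloudCum ν (η.drop 1) := by
  rw [cloudCum_conv]
  have h1 : ∀ j ∈ Finset.range η.length,
      rhoOne (η.take (j+1)) * cloudCum ν (η.drop j)
        = if j = 1 then cloudCum ν (η.drop 1) else 0 := by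
    intro j hj
    simp only [Finset.mem_range] at hj
    simp only [rhoOne, List.length_take]
    by_cases h : j = 1
    · subst h
      rw [if_pos (by omega), if_pos rfl, one_mul]
    · rw [if_neg (by omega), if_neg h, zero_mul]
  rw [Finset.sum_congr rfl h1, Finset.sum_ite_eq' (Finset.range η.length) 1
    (fun _ => cloudCum ν (η.drop 1))]
  by_cases h : 1 < η.length
  · rw [if_pos (Finset.mem_range.mpr h)]
  · rw [if_neg (by simp; omega)]
    have : η.drop 1 = [] := List.drop_eq_nil_of_le (by omega)
    rw [this]
    simp [cloudCum]

lemma cum_conv_delta {X : Type*} (ν : List X → ℝ) (η : List X) (hne : η ≠ []) :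
    cloudCum (cloudConv deltaCloud ν) η = cloudCum ν η := by
  have hn : 0 < η.length := List.length_pos_iff.mpr hne
  rw [cloudCum_conv]
  have h1 : ∀ j ∈ Finset.range η.length,
      deltaCloud (η.take (j+1)) * cloudCum ν (η.drop j)
        = if j = 0 then cloudCum ν η else 0 := by
    intro j hj
    simp only [Finset.mem_range] at hj
    simp only [deltaCloud, List.length_take]
    by_cases h : j = 0
    · subst h
      rw [if_pos (by omega), if_pos rfl, one_mul, List.drop_zero]
    · rw [if_neg (by omega), if_neg h, zero_mul]
  rw [Finset.sum_congr rfl h1, Finset.sum_ite_eq' (Finset.range η.length) 0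
    (fun _ => cloudCum ν η), if_pos (Finset.mem_range.mpr hn)]

lemma rho_le_delta {X : Type*} : ∀ η : List X, η ≠ [] →
    cloudCum rhoOne η ≤ cloudCum deltaCloud η := by
  intro η hne
  have hn : 0 < η.length := List.length_pos_iff.mpr hne
  have h1 : cloudCum rhoOne η = if 1 ∈ Finset.range η.length then (1:ℝ) else 0 := by
    rw [← Finset.sum_ite_eq' (Finset.range η.length) 1 (fun _ => (1:ℝ))]
    refine Finset.sum_congr rfl fun j hj => ?_
    simp only [Finset.mem_range] at hj
    simp only [rhoOne, List.length_take]
    by_cases h : j = 1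
    · subst h; rw [if_pos (by omega), if_pos rfl]
    · rw [if_neg (by omega), if_neg h]
  have h2 : cloudCum deltaCloud η = 1 := by
    rw [show (1:ℝ) = if 0 ∈ Finset.range η.length then (1:ℝ) else 0 by
          rw [if_pos (Finset.mem_range.mpr hn)],
        ← Finset.sum_ite_eq' (Finset.range η.length) 0 (fun _ => (1:ℝ))]
    refine Finset.sum_congr rfl fun j hj => ?_
    simp only [Finset.mem_range] at hj
    simp only [deltaCloud, List.length_take]
    by_cases h : j = 0
    · subst h; rw [if_pos (by omega), if_pos rfl]
    · rw [if_neg (by omega), if_neg h]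
  rw [h1, h2]
  split <;> norm_num

/-- For a nonnegative cloud `ν`, the following are equivalent:
(a) convolution on the right by `ν` preserves `⊴`;
(b) `ρ¹ * ν ⊴ ν`;
(c) `ν~(η') ≤ ν~(η)` whenever `η'` is a suffix of `η`. -/
theorem right_convolution_order_preserving {X : Type*} (ν : List X → ℝ)
    (hν : ∀ η : List X, η ≠ [] → 0 ≤ ν η) :
    ((∀ μ₁ μ₂ : List X → ℝ, cloudLE μ₁ μ₂ → cloudLE (cloudConv μ₁ ν) (cloudConv μ₂ ν))
        ↔ cloudLE (cloudConv rhoOne ν) ν)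
    ∧ (cloudLE (cloudConv rhoOne ν) ν
        ↔ ∀ η η' : List X, η' ≠ [] → η' <:+ η → cloudCum ν η' ≤ cloudCum ν η) := by
  have hca : (∀ η η' : List X, η' ≠ [] → η' <:+ η → cloudCum ν η' ≤ cloudCum ν η) →
      ∀ μ₁ μ₂ : List X → ℝ, cloudLE μ₁ μ₂ → cloudLE (cloudConv μ₁ ν) (cloudConv μ₂ ν) := by
    intro hc μ₁ μ₂ h12 η hne
    have hn : 0 < η.length := List.length_pos_iff.mpr hne
    rw [cloudCum_conv, cloudCum_conv]
    refine abel_le η.length (fun j => μ₁ (η.take (j+1))) (fun j => μ₂ (η.take (j+1)))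
      (fun j => cloudCum ν (η.drop j)) ?_ ?_ ?_
    · intro j hj
      rw [← cloudCum_take μ₁ η hj, ← cloudCum_take μ₂ η hj]
      refine h12 _ (List.ne_nil_of_length_pos ?_)
      rw [List.length_take]; omega
    · intro j hj
      have heq : η.drop (j+1) = (η.drop j).drop 1 := by
        rw [List.drop_drop]
      rw [heq]
      refine hc (η.drop j) ((η.drop j).drop 1) (List.ne_nil_of_length_pos ?_)
        (List.drop_suffix _ _)
      rw [List.length_drop, List.length_drop]; omega
    · intro j _
      exact cloudCum_nonneg hν _
  have hbc : cloudLE (cloudConv rhoOne ν) ν ↔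
      ∀ η η' : List X, η' ≠ [] → η' <:+ η → cloudCum ν η' ≤ cloudCum ν η := by
    constructor
    · intro hb η η' hne hsuf
      obtain ⟨l, rfl⟩ := hsuf
      induction l with
      | nil => simp
      | cons x l ihl =>
        refine le_trans ihl ?_
        have h := hb (x :: (l ++ η')) (by simp)
        rw [cum_conv_rho] at h
        simpa using h
    · intro hc η hne
      rw [cum_conv_rho]
      by_cases h : η.drop 1 = []
      · rw [h]
        simpa [cloudCum] using cloudCum_nonneg hν η
      · exact hc η (η.drop 1) h (List.drop_suffix _ _)
  refine ⟨⟨fun ha => ?_, fun hb => hca (hbc.mp hb)⟩, hbc⟩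
  intro η hne
  have h1 := ha rhoOne deltaCloud rho_le_delta η hne
  rwa [cum_conv_delta ν η hne] at h1
end

section
/- (Cloud collapse identity) For g, h : X → [0,1], the cumulative distribution satisfies (β_g * β_h)~ = (β_{1-(1-g)(1-h)})~ - I_g * ρ¹ * I_h, where β_f is the cloud taking value 1-f(x₀) on level-0 markers (x₀), value f(x₀) on level-1 markers (x₀,x₁), and 0 on higher levels, and I_f is the cloud taking value f(x₀) on level-0 markers and 0 elsewhere. Consequently β_{g₁}*⋯*β_{gₙ} ⊴ β_{1-∏(1-g_i)} for any g₁,…,gₙ : X → [0,1]. -/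
/-- The cloud `β_f`: value `1 - f(x₀)` on level-0 markers `(x₀)`, value `f(x₀)`
on level-1 markers `(x₀,x₁)`, and `0` on higher levels. -/
def cloudBeta {X : Type*} (f : X → ℝ) : List X → ℝ
  | [x] => 1 - f x
  | [x, _] => f x
  | _ => 0

/-- The cloud `I_f`: value `f(x₀)` on level-0 markers `(x₀)`, `0` elsewhere. -/
def cloudI {X : Type*} (f : X → ℝ) : List X → ℝ
  | [x] => f x
  | _ => 0

/-- The convolution product `ν₁ * ⋯ * νₙ` (empty product = `ρ⁰ = I_1`). -/
def cloudProd {X : Type*} {n : ℕ} (νs : Fin n → List X → ℝ) : List X → ℝ :=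
  (List.ofFn νs).foldr cloudConv (cloudI fun _ => 1)

section Aux

variable {X : Type*}

lemma sum_range_shrink (f : ℕ → ℝ) {k m : ℕ} (hk : k ≤ m)
    (h0 : ∀ j, k ≤ j → j < m → f j = 0) :
    ∑ j ∈ Finset.range m, f j = ∑ j ∈ Finset.range k, f j := by
  refine (Finset.sum_subset (Finset.range_subset_range.mpr hk) ?_).symm
  intro j hj hj'
  exact h0 j (by simpa using hj') (by simpa using hj)

lemma length_take_ge {X : Type*} {l : List X} {k j : ℕ} (h : j < l.length) (hk : k ≤ j + 1) :
    k ≤ (l.take (j + 1)).length := by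
  rw [List.length_take]
  exact le_min hk (by omega)

lemma cloudBeta_long (f : X → ℝ) : ∀ σ : List X, 3 ≤ σ.length → cloudBeta f σ = 0
  | [], h => by simp at h
  | [_], h => by simp at h
  | [_, _], h => by simp at h
  | _::_::_::_, _ => rfl

lemma cloudI_long (f : X → ℝ) : ∀ σ : List X, 2 ≤ σ.length → cloudI f σ = 0
  | [], h => by simp at h
  | [_], h => by simp at h
  | _::_::_, _ => rfl

/-- Key structural lemma: `(μ * ν)~ (η) = Σ_j μ(η_{≤j}) ν~(η_{≥j})`. -/
lemma cum_conv (μ ν : List X → ℝ) (η : List X) :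
    cloudCum (cloudConv μ ν) η
      = ∑ j ∈ Finset.range η.length, μ (η.take (j + 1)) * cloudCum ν (η.drop j) := by
  unfold cloudCum cloudConv
  have h1 : ∀ k ∈ Finset.range η.length,
      (∑ j ∈ Finset.range (η.take (k + 1)).length,
        μ ((η.take (k + 1)).take (j + 1)) * ν ((η.take (k + 1)).drop j))
      = ∑ j ∈ Finset.range (k + 1),
          μ (η.take (j + 1)) * ν ((η.drop j).take (k + 1 - j)) := by
    intro k hk
    rw [Finset.mem_range] at hk
    have hlen : (η.take (k + 1)).length = k + 1 := by
      simp only [List.length_take]; omega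
    rw [hlen]
    refine Finset.sum_congr rfl ?_
    intro j hj
    rw [Finset.mem_range] at hj
    rw [List.take_take, min_eq_left (by omega : j + 1 ≤ k + 1), List.drop_take]
  rw [Finset.sum_congr rfl h1]
  rw [Finset.sum_comm' (s := Finset.range η.length) (t := fun k => Finset.range (k + 1))
      (t' := Finset.range η.length) (s' := fun j => Finset.Ico j η.length)
      (by intro k j; simp only [Finset.mem_range, Finset.mem_Ico]; omega)]
  refine Finset.sum_congr rfl ?_
  intro j hj
  rw [Finset.mem_range] at hj
  rw [Finset.sum_Ico_eq_sum_range, List.length_drop, Finset.mul_sum]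
  refine Finset.sum_congr rfl ?_
  intro k hk
  have : j + k + 1 - j = k + 1 := by omega
  rw [this]

lemma cum_beta_one (f : X → ℝ) (a : X) : cloudCum (cloudBeta f) [a] = 1 - f a := by
  simp [cloudCum, cloudBeta]

lemma cum_beta_two (f : X → ℝ) (a b : X) (t : List X) :
    cloudCum (cloudBeta f) (a :: b :: t) = 1 := by
  show ∑ j ∈ Finset.range (a :: b :: t).length, cloudBeta f ((a :: b :: t).take (j + 1)) = 1
  rw [sum_range_shrink _ (by simp : 2 ≤ (a :: b :: t).length)
      (fun j hj hj' => cloudBeta_long f _ (length_take_ge (by simpa using hj') (by omega)))]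
  rw [Finset.sum_range_succ, Finset.sum_range_one]
  norm_num [cloudBeta]

lemma convRhoI_one (h : X → ℝ) (a : X) : cloudConv rhoOne (cloudI h) [a] = 0 := by
  simp [cloudConv, rhoOne]

lemma convRhoI_two (h : X → ℝ) (a b : X) : cloudConv rhoOne (cloudI h) [a, b] = h b := by
  show ∑ j ∈ Finset.range 2, _ = _
  rw [Finset.sum_range_succ, Finset.sum_range_one]
  norm_num [rhoOne, cloudI]

lemma convRhoI_long (h : X → ℝ) (a b c : X) (t : List X) :
    cloudConv rhoOne (cloudI h) (a :: b :: c :: t) = 0 := by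
  apply Finset.sum_eq_zero
  intro j hj
  rw [Finset.mem_range] at hj
  rcases Nat.lt_or_ge j 2 with h2 | h2
  · interval_cases j
    · simp [rhoOne]
    · rw [cloudI_long h _ (by simp), mul_zero]
  · have : rhoOne ((a :: b :: c :: t).take (j + 1)) = 0 := by
      simp only [rhoOne, List.length_take, List.length_cons]
      rw [if_neg (by omega)]
    rw [this, zero_mul]

lemma C_one (g h : X → ℝ) (a : X) :
    cloudConv (cloudI g) (cloudConv rhoOne (cloudI h)) [a] = 0 := by
  show ∑ j ∈ Finset.range 1, _ = _
  rw [Finset.sum_range_one]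
  norm_num [convRhoI_one, cloudI]

lemma C_two (g h : X → ℝ) (a b : X) :
    cloudConv (cloudI g) (cloudConv rhoOne (cloudI h)) [a, b] = g a * h b := by
  show ∑ j ∈ Finset.range 2, _ = _
  rw [Finset.sum_range_succ, Finset.sum_range_one]
  norm_num [convRhoI_two, cloudI]

lemma C_long (g h : X → ℝ) (a b c : X) (t : List X) :
    cloudConv (cloudI g) (cloudConv rhoOne (cloudI h)) (a :: b :: c :: t) = 0 := by
  apply Finset.sum_eq_zero
  intro j hj
  rw [Finset.mem_range] at hj
  match j with
  | 0 =>
    show cloudI g _ * cloudConv rhoOne (cloudI h) ((a :: b :: c :: t).drop 0) = 0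
    rw [List.drop_zero, convRhoI_long, mul_zero]
  | (j' + 1) =>
    rw [cloudI_long g _ (length_take_ge (show j' + 1 < _ from hj) (by omega)), zero_mul]

/-- Part 1: the collapse identity (holds without any boundedness assumptions). -/
lemma cloud_collapse_id (g h : X → ℝ) (η : List X) (hη : η ≠ []) :
    cloudCum (cloudConv (cloudBeta g) (cloudBeta h)) η
      = cloudCum (cloudBeta (fun x => 1 - (1 - g x) * (1 - h x))) η
        - cloudConv (cloudI g) (cloudConv rhoOne (cloudI h)) η := by
  match η with
  | [] => exact absurd rfl hη
  | [a] =>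
    rw [cum_conv, C_one, cum_beta_one]
    rw [show Finset.range [a].length = Finset.range 1 from rfl, Finset.sum_range_one]
    show cloudBeta g [a] * cloudCum (cloudBeta h) [a] = _
    rw [cum_beta_one]
    show (1 - g a) * (1 - h a) = _
    ring
  | a :: b :: t =>
    rw [cum_conv]
    rw [sum_range_shrink _ (by simp : 2 ≤ (a :: b :: t).length)
      (fun j hj hj' => by
        rw [cloudBeta_long g _ (length_take_ge (by simpa using hj') (by omega)), zero_mul])]
    rw [Finset.sum_range_succ, Finset.sum_range_one]
    show cloudBeta g [a] * cloudCum (cloudBeta h) (a :: b :: t)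
        + cloudBeta g [a, b] * cloudCum (cloudBeta h) (b :: t) = _
    rw [cum_beta_two]
    rw [cum_beta_two (fun x => 1 - (1 - g x) * (1 - h x))]
    match t with
    | [] =>
      rw [cum_beta_one, C_two]
      show (1 - g a) * 1 + g a * (1 - h b) = 1 - g a * h b
      ring
    | c :: t' =>
      rw [cum_beta_two, C_long]
      show (1 - g a) * 1 + g a * 1 = 1 - 0
      ring

lemma conv_nonneg {μ ν : List X → ℝ} (hμ : ∀ σ, 0 ≤ μ σ) (hν : ∀ σ, 0 ≤ ν σ)
    (σ : List X) : 0 ≤ cloudConv μ ν σ :=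
  Finset.sum_nonneg fun j _ => mul_nonneg (hμ _) (hν _)

lemma beta_nonneg {f : X → ℝ} (hf : ∀ x, 0 ≤ f x ∧ f x ≤ 1) :
    ∀ σ : List X, 0 ≤ cloudBeta f σ
  | [] => le_of_eq rfl
  | [x] => by have := (hf x).2; show (0:ℝ) ≤ 1 - f x; linarith
  | [x, y] => (hf x).1
  | _::_::_::_ => le_of_eq (cloudBeta_long _ _ (by simp)).symm

lemma I_nonneg {f : X → ℝ} (hf : ∀ x, 0 ≤ f x) : ∀ σ : List X, 0 ≤ cloudI f σ
  | [] => le_of_eq rfl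
  | [x] => hf x
  | _::_::_ => le_of_eq rfl

lemma rho_nonneg (σ : List X) : 0 ≤ rhoOne σ := by
  unfold rhoOne; positivity

lemma conv_mono {μ ν ν' : List X → ℝ} (hμ : ∀ σ, 0 ≤ μ σ) (hν : cloudLE ν ν') :
    cloudLE (cloudConv μ ν) (cloudConv μ ν') := by
  intro η hη
  rw [cum_conv, cum_conv]
  apply Finset.sum_le_sum
  intro j hj
  rw [Finset.mem_range] at hj
  refine mul_le_mul_of_nonneg_left (hν _ ?_) (hμ _)
  intro hnil
  rw [List.drop_eq_nil_iff] at hnil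
  omega

lemma cum_I1 (η : List X) (hη : η ≠ []) : cloudCum (cloudI fun _ => (1:ℝ)) η = 1 := by
  match η with
  | a :: t =>
    show ∑ j ∈ Finset.range (a :: t).length, cloudI (fun _ => (1:ℝ)) ((a :: t).take (j + 1)) = 1
    rw [sum_range_shrink _ (by simp : 1 ≤ (a :: t).length)
      (fun j hj hj' => cloudI_long _ _ (length_take_ge (by simpa using hj') (by omega)))]
    rw [Finset.sum_range_one]
    rfl

lemma cloud_collapse_prod (n : ℕ) (g : Fin n → X → ℝ)
    (hg : ∀ i x, 0 ≤ g i x ∧ g i x ≤ 1) :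
    cloudLE (cloudProd fun i => cloudBeta (g i))
      (cloudBeta fun x => 1 - ∏ i, (1 - g i x)) := by
  induction n with
  | zero =>
    intro η hη
    have h1 : cloudProd (fun i : Fin 0 => cloudBeta (g i)) = cloudI (fun _ => 1) := by
      simp [cloudProd]
    have h2 : (fun x : X => 1 - ∏ i : Fin 0, (1 - g i x)) = fun _ => (0:ℝ) := by
      funext x; simp
    rw [h1, h2, cum_I1 η hη]
    match η with
    | [a] => rw [cum_beta_one]; norm_num
    | a :: b :: t => rw [cum_beta_two]
  | succ n ih =>
    have hprod : (cloudProd fun i : Fin (n + 1) => cloudBeta (g i))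
        = cloudConv (cloudBeta (g 0)) (cloudProd fun i : Fin n => cloudBeta (g i.succ)) := by
      simp [cloudProd, List.ofFn_succ]
    set G : X → ℝ := fun x => 1 - ∏ i : Fin n, (1 - g i.succ x) with hG
    intro η hη
    have step1 : cloudCum (cloudProd fun i : Fin (n + 1) => cloudBeta (g i)) η
        ≤ cloudCum (cloudConv (cloudBeta (g 0)) (cloudBeta G)) η := by
      rw [hprod]
      exact conv_mono (beta_nonneg (hg 0)) (ih (fun i => g i.succ) (fun i x => hg i.succ x)) η hη
    refine le_trans step1 ?_
    have hid := cloud_collapse_id (g 0) G η hη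
    have hF : (fun x => 1 - (1 - g 0 x) * (1 - G x))
        = (fun x => 1 - ∏ i : Fin (n + 1), (1 - g i x)) := by
      funext x
      simp only [hG]
      rw [Fin.prod_univ_succ]
      ring
    rw [hF] at hid
    have hC : 0 ≤ cloudConv (cloudI (g 0)) (cloudConv rhoOne (cloudI G)) η :=
      conv_nonneg (I_nonneg fun x => (hg 0 x).1)
        (conv_nonneg rho_nonneg (I_nonneg fun x => by
          have h0 : 0 ≤ ∏ i : Fin n, (1 - g i.succ x) :=
            Finset.prod_nonneg fun i _ => by linarith [(hg i.succ x).2]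
          have : G x = 1 - ∏ i : Fin n, (1 - g i.succ x) := rfl
          rw [this]
          have h1 : ∏ i : Fin n, (1 - g i.succ x) ≤ 1 :=
            Finset.prod_le_one (fun i _ => by linarith [(hg i.succ x).2])
              (fun i _ => by linarith [(hg i.succ x).1])
          linarith)) η
    linarith [hid]

end Aux

/-- Cloud collapse identity
`(β_g * β_h)~ = (β_{1-(1-g)(1-h)})~ - I_g * ρ¹ * I_h`, and consequently
`β_{g₁} * ⋯ * β_{gₙ} ⊴ β_{1-∏(1-gᵢ)}`. -/
theorem cloud_collapse {X : Type*} :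
    (∀ g h : X → ℝ, (∀ x, 0 ≤ g x ∧ g x ≤ 1) → (∀ x, 0 ≤ h x ∧ h x ≤ 1) →
      ∀ η : List X, η ≠ [] →
        cloudCum (cloudConv (cloudBeta g) (cloudBeta h)) η
          = cloudCum (cloudBeta (fun x => 1 - (1 - g x) * (1 - h x))) η
            - cloudConv (cloudI g) (cloudConv rhoOne (cloudI h)) η)
    ∧ ∀ (n : ℕ) (g : Fin n → X → ℝ), (∀ i x, 0 ≤ g i x ∧ g i x ≤ 1) →
        cloudLE (cloudProd fun i => cloudBeta (g i))
          (cloudBeta fun x => 1 - ∏ i, (1 - g i x)) := by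
  exact ⟨fun g h _ _ => cloud_collapse_id g h, cloud_collapse_prod⟩
end
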